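/- Let S = ⟨g₁, …, g_{n−k}⟩ be a subgroup of the n-qubit Pauli group G_n generated by n−k independent, mutually commuting elements, and suppose −I ∉ S. Then each g_i is Hermitian with g_i² = I, the matrix Π = ∏_{i=1}^{n−k} (I + g_i)/2 is an orthogonal projection (Π² = Π = Π†) whose range is exactly V_S = { v ∈ ℂ^{2^n} : s v = v for all s ∈ S }, and tr(Π) = 2^k. -/

import Mathlib

open scoped Matrix

noncomputable section

/-- The four Pauli matrices `I, σx, σy, σz` as `2 × 2` complex matrices. -/
def pauliMatrix : Fin 4 → Matrix (Fin 2) (Fin 2) ℂ :=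
  ![1, !![0, 1; 1, 0], !![0, -Complex.I; Complex.I, 0], !![1, 0; 0, -1]]

/-- The `n`-fold tensor (Kronecker) product of `2 × 2` matrices, as a
`2^n × 2^n` matrix indexed by `Fin n → Fin 2`. -/
def nTensor (n : ℕ) (f : Fin n → Matrix (Fin 2) (Fin 2) ℂ) :
    Matrix (Fin n → Fin 2) (Fin n → Fin 2) ℂ :=
  fun x y => ∏ i, f i (x i) (y i)

/-- Membership in the `n`-qubit Pauli group: a prefactor `±1, ±i` times an
`n`-fold tensor product of Pauli matrices. -/
def IsPauliGroupElem (n : ℕ) (A : Matrix (Fin n → Fin 2) (Fin n → Fin 2) ℂ) : Prop :=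
  ∃ α : ℂ, (α = 1 ∨ α = -1 ∨ α = Complex.I ∨ α = -Complex.I) ∧
    ∃ p : Fin n → Fin 4, A = α • nTensor n fun i => pauliMatrix (p i)

/-- The joint fixed subspace `V_S = {v | s v = v for all s ∈ S}` of a set `S` of matrices. -/
def fixedSubspace (n : ℕ) (S : Set (Matrix (Fin n → Fin 2) (Fin n → Fin 2) ℂ)) :
    Submodule ℂ ((Fin n → Fin 2) → ℂ) where
  carrier := {v | ∀ s ∈ S, s.mulVec v = v}
  add_mem' := by
    intro a b ha hb s hs
    rw [Matrix.mulVec_add, ha s hs, hb s hs]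
  zero_mem' := by
    intro s hs
    rw [Matrix.mulVec_zero]
  smul_mem' := by
    intro c a ha s hs
    rw [Matrix.mulVec_smul, ha s hs]


-- ===== phases =====
def IsPhase (c : ℂ) : Prop := c = 1 ∨ c = -1 ∨ c = Complex.I ∨ c = -Complex.I

lemma IsPhase.mul {a b : ℂ} (ha : IsPhase a) (hb : IsPhase b) : IsPhase (a * b) := by
  unfold IsPhase at *
  rcases ha with h|h|h|h <;> rcases hb with h'|h'|h'|h' <;> subst h h' <;>
    simp [Complex.I_mul_I]

lemma IsPhase.one : IsPhase 1 := Or.inl rfl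

lemma IsPhase.sq {a : ℂ} (ha : IsPhase a) : a * a = 1 ∨ a * a = -1 := by
  rcases ha with h|h|h|h <;> subst h <;> simp [Complex.I_mul_I]

lemma IsPhase.prod {ι : Type*} [Fintype ι] (c : ι → ℂ) (h : ∀ i, IsPhase (c i)) :
    IsPhase (∏ i, c i) :=
  Finset.prod_induction c IsPhase (fun _ _ => IsPhase.mul) IsPhase.one (fun i _ => h i)

def pIdx : Fin 4 → Fin 4 → Fin 4 :=
  ![![0,1,2,3], ![1,0,3,2], ![2,3,0,1], ![3,2,1,0]]

def pPh : Fin 4 → Fin 4 → ℂ :=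
  ![![1,1,1,1], ![1,1,Complex.I,-Complex.I], ![1,-Complex.I,1,Complex.I],
    ![1,Complex.I,-Complex.I,1]]

lemma pPh_isPhase (a b : Fin 4) : IsPhase (pPh a b) := by
  fin_cases a <;> fin_cases b <;> simp [pPh, IsPhase, Matrix.vecHead, Matrix.vecTail]

lemma pauli_mul (a b : Fin 4) :
    pauliMatrix a * pauliMatrix b = pPh a b • pauliMatrix (pIdx a b) := by
  fin_cases a <;> fin_cases b <;>
    · ext i j
      fin_cases i <;> fin_cases j <;>
        simp [pauliMatrix, pPh, pIdx, Matrix.mul_apply, Fin.sum_univ_two, Complex.I_mul_I,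
          Matrix.vecHead, Matrix.vecTail]

lemma pIdx_self (a : Fin 4) : pIdx a a = 0 := by fin_cases a <;> rfl

lemma pPh_self (a : Fin 4) : pPh a a = 1 := by
  fin_cases a <;> simp [pPh, Matrix.vecHead, Matrix.vecTail]

lemma pauli_zero : pauliMatrix 0 = 1 := rfl

lemma pauli_trace (a : Fin 4) : (pauliMatrix a).trace = if a = 0 then 2 else 0 := by
  fin_cases a <;> simp [pauliMatrix, Matrix.trace, Matrix.diag, Fin.sum_univ_two]

-- ===== nTensor =====
lemma nTensor_mul (n : ℕ) (f h : Fin n → Matrix (Fin 2) (Fin 2) ℂ) :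
    nTensor n f * nTensor n h = nTensor n (fun i => f i * h i) := by
  ext x y
  simp only [nTensor, Matrix.mul_apply, ← Finset.prod_mul_distrib]
  rw [← Fintype.piFinset_univ]
  exact (Finset.prod_univ_sum (fun _ => Finset.univ) (fun i a => f i (x i) a * h i a (y i))).symm

lemma nTensor_one (n : ℕ) : nTensor n (fun _ => 1) = 1 := by
  ext x y
  simp only [nTensor, Matrix.one_apply]
  by_cases h : x = y
  · subst h; simp
  · obtain ⟨i, hi⟩ := Function.ne_iff.mp h
    rw [if_neg h]
    exact Finset.prod_eq_zero (Finset.mem_univ i) (by simp [Matrix.one_apply, hi])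

lemma nTensor_smul (n : ℕ) (c : Fin n → ℂ) (f : Fin n → Matrix (Fin 2) (Fin 2) ℂ) :
    nTensor n (fun i => c i • f i) = (∏ i, c i) • nTensor n f := by
  ext x y
  simp [nTensor, Finset.prod_mul_distrib, Matrix.smul_apply, mul_comm]

lemma nTensor_trace (n : ℕ) (f : Fin n → Matrix (Fin 2) (Fin 2) ℂ) :
    (nTensor n f).trace = ∏ i, (f i).trace := by
  simp only [Matrix.trace, Matrix.diag, nTensor]
  rw [← Fintype.piFinset_univ]
  exact (Finset.prod_univ_sum (fun _ => Finset.univ) (fun i a => f i a a)).symm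

-- ===== IsPauliGroupElem =====
lemma isPhase_of_pauli {n : ℕ} {A : Matrix (Fin n → Fin 2) (Fin n → Fin 2) ℂ}
    (h : IsPauliGroupElem n A) :
    ∃ α : ℂ, IsPhase α ∧ ∃ p : Fin n → Fin 4, A = α • nTensor n fun i => pauliMatrix (p i) := h

lemma isPauli_one (n : ℕ) : IsPauliGroupElem n 1 :=
  ⟨1, Or.inl rfl, fun _ => 0, by simp [pauli_zero, nTensor_one]⟩

lemma IsPauliGroupElem.mul {n : ℕ} {A B : Matrix (Fin n → Fin 2) (Fin n → Fin 2) ℂ}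
    (hA : IsPauliGroupElem n A) (hB : IsPauliGroupElem n B) : IsPauliGroupElem n (A * B) := by
  obtain ⟨α, hα, p, rfl⟩ := hA
  obtain ⟨β, hβ, q, rfl⟩ := hB
  refine ⟨α * β * ∏ i, pPh (p i) (q i),
    ((IsPhase.mul hα hβ).mul (IsPhase.prod _ fun i => pPh_isPhase _ _)),
    fun i => pIdx (p i) (q i), ?_⟩
  rw [smul_mul_smul_comm, nTensor_mul]
  have : (fun i => pauliMatrix (p i) * pauliMatrix (q i)) =
      fun i => pPh (p i) (q i) • pauliMatrix (pIdx (p i) (q i)) := by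
    funext i; exact pauli_mul _ _
  rw [this, nTensor_smul, smul_smul]

lemma IsPauliGroupElem.sq {n : ℕ} {A : Matrix (Fin n → Fin 2) (Fin n → Fin 2) ℂ}
    (hA : IsPauliGroupElem n A) : A * A = 1 ∨ A * A = -1 := by
  obtain ⟨α, hα, p, rfl⟩ := hA
  rw [smul_mul_smul_comm, nTensor_mul]
  have : (fun i => pauliMatrix (p i) * pauliMatrix (p i)) = fun _ : Fin n => 1 := by
    funext i; rw [pauli_mul, pIdx_self, pPh_self, pauli_zero, one_smul]
  rw [this, nTensor_one]
  rcases IsPhase.sq hα with h | h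
  · left; rw [h, one_smul]
  · right; rw [h, neg_smul, one_smul]

lemma IsPauliGroupElem.trace_or {n : ℕ} {A : Matrix (Fin n → Fin 2) (Fin n → Fin 2) ℂ}
    (hA : IsPauliGroupElem n A) : A.trace = 0 ∨ ∃ α, IsPhase α ∧ A = α • 1 := by
  obtain ⟨α, hα, p, rfl⟩ := hA
  by_cases hp : ∀ i, p i = 0
  · right
    refine ⟨α, hα, ?_⟩
    have : (fun i => pauliMatrix (p i)) = fun _ : Fin n => 1 := by
      funext i; rw [hp i, pauli_zero]
    rw [this, nTensor_one]
  · left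
    push_neg at hp
    obtain ⟨i, hi⟩ := hp
    rw [Matrix.trace_smul, nTensor_trace]
    have : (pauliMatrix (p i)).trace = 0 := by rw [pauli_trace, if_neg hi]
    rw [Finset.prod_eq_zero (Finset.mem_univ i) this, smul_zero]

-- ===== list lemmas =====
section Lists
variable {M : Type*} [Monoid M]

lemma list_prod_sq (l : List M) (hc : ∀ x ∈ l, ∀ y ∈ l, Commute x y)
    (hi : ∀ x ∈ l, x * x = x) : l.prod * l.prod = l.prod := by
  induction l with
  | nil => simp
  | cons a t ih =>
    have hat : Commute a t.prod :=
      Commute.list_prod_right _ _ fun y hy => hc a (.head t) y (.tail a hy)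
    have ihp : t.prod * t.prod = t.prod :=
      ih (fun x hx y hy => hc x (.tail a hx) y (.tail a hy)) (fun x hx => hi x (.tail a hx))
    calc (a :: t).prod * (a :: t).prod = a * (t.prod * a) * t.prod := by
          simp [List.prod_cons, mul_assoc]
      _ = (a * a) * (t.prod * t.prod) := by rw [← hat.eq]; simp [mul_assoc]
      _ = (a :: t).prod := by rw [hi a (.head t), ihp, List.prod_cons]

lemma list_prod_absorb (a : M) (l : List M) (hc : ∀ x ∈ l, Commute a x)
    (h : ∃ x ∈ l, a * x = x) : a * l.prod = l.prod := by
  induction l with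
  | nil => simp at h
  | cons b t ih =>
    obtain ⟨x, hx, hax⟩ := h
    rcases List.mem_cons.mp hx with rfl | hxt
    · simp only [List.prod_cons, ← mul_assoc, hax]
    · have h2 : a * t.prod = t.prod := ih (fun y hy => hc y (.tail b hy)) ⟨x, hxt, hax⟩
      have hab : Commute a b := hc b (.head t)
      calc a * (b :: t).prod = b * (a * t.prod) := by
            simp only [List.prod_cons, ← mul_assoc, hab.eq]
        _ = (b :: t).prod := by rw [h2, List.prod_cons]

end Lists

lemma list_prod_mulVec_fix {ι : Type*} [Fintype ι] [DecidableEq ι]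
    (l : List (Matrix ι ι ℂ)) (v : ι → ℂ) (h : ∀ A ∈ l, A.mulVec v = v) :
    l.prod.mulVec v = v := by
  induction l with
  | nil => simp [Matrix.one_mulVec]
  | cons a t ih =>
    rw [List.prod_cons, ← Matrix.mulVec_mulVec, ih (fun A hA => h A (.tail a hA)),
      h a (.head t)]

lemma list_prod_conjTranspose {ι : Type*} [Fintype ι] [DecidableEq ι]
    (l : List (Matrix ι ι ℂ)) (hc : ∀ x ∈ l, ∀ y ∈ l, Commute x y)
    (hh : ∀ x ∈ l, xᴴ = x) : l.prodᴴ = l.prod := by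
  induction l with
  | nil => simp
  | cons a t ih =>
    have hat : Commute a t.prod :=
      Commute.list_prod_right _ _ fun y hy => hc a (.head t) y (.tail a hy)
    rw [List.prod_cons, Matrix.conjTranspose_mul,
      ih (fun x hx y hy => hc x (.tail a hx) y (.tail a hy)) (fun x hx => hh x (.tail a hx)),
      hh a (.head t), ← hat.eq]

-- ===== gprod =====
section Gprod
variable {n m : ℕ} (g : Fin m → Matrix.unitaryGroup (Fin n → Fin 2) ℂ)
  (hcomm : ∀ i j, g i * g j = g j * g i)

def gprod (B : Finset (Fin m)) : Matrix.unitaryGroup (Fin n → Fin 2) ℂ :=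
  B.noncommProd g (fun a _ b _ _ => hcomm a b)

lemma gprod_empty : gprod g hcomm ∅ = 1 := Finset.noncommProd_empty _ _

lemma gprod_insert (i : Fin m) (B : Finset (Fin m)) (h : i ∉ B) :
    gprod g hcomm (insert i B) = g i * gprod g hcomm B :=
  Finset.noncommProd_insert_of_notMem _ _ _ _ h

lemma gprod_mem (S : Subgroup (Matrix.unitaryGroup (Fin n → Fin 2) ℂ))
    (hg : ∀ i, g i ∈ S) (B : Finset (Fin m)) : gprod g hcomm B ∈ S :=
  Subgroup.noncommProd_mem _ _ fun i _ => hg i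

lemma gprod_pauli (hpauli : ∀ i, IsPauliGroupElem n (g i)) (B : Finset (Fin m)) :
    IsPauliGroupElem n (gprod g hcomm B : Matrix (Fin n → Fin 2) (Fin n → Fin 2) ℂ) := by
  induction B using Finset.induction_on with
  | empty => rw [gprod_empty]; exact isPauli_one n
  | insert _ _ hx ih =>
    rw [gprod_insert _ _ _ _ hx, Matrix.UnitaryGroup.mul_val]
    exact IsPauliGroupElem.mul (hpauli _) ih

end Gprod

lemma gprod_mem' {n m : ℕ} (g : Fin m → Matrix.unitaryGroup (Fin n → Fin 2) ℂ)
    (hcomm : ∀ i j, g i * g j = g j * g i)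
    (S' : Subgroup (Matrix.unitaryGroup (Fin n → Fin 2) ℂ)) (B : Finset (Fin m))
    (hg : ∀ i ∈ B, g i ∈ S') : gprod g hcomm B ∈ S' :=
  Subgroup.noncommProd_mem _ _ hg

lemma mem_fixedSubspace {n : ℕ} {X : Set (Matrix (Fin n → Fin 2) (Fin n → Fin 2) ℂ)}
    {v : (Fin n → Fin 2) → ℂ} :
    v ∈ fixedSubspace n X ↔ ∀ s ∈ X, s.mulVec v = v := Iff.rfl

/-- For `S = ⟨g₁, …, g_{n−k}⟩` generated by independent commuting Pauli-group elements with
`−I ∉ S`: each `gᵢ` is Hermitian with `gᵢ² = I`, the matrix `Π = ∏ᵢ (I + gᵢ)/2` is an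
orthogonal projection (`Π² = Π = Π†`) whose range is exactly `V_S`, and `tr Π = 2^k`. -/
theorem stmt3 (n k : ℕ) (hk : k ≤ n)
    (g : Fin (n - k) → Matrix.unitaryGroup (Fin n → Fin 2) ℂ)
    (hpauli : ∀ i, IsPauliGroupElem n (g i))
    (hcomm : ∀ i j, g i * g j = g j * g i)
    (hindep : ∀ i : Fin (n - k),
      Subgroup.closure (Set.range fun j : {j : Fin (n - k) // j ≠ i} => g j)
        < Subgroup.closure (Set.range g))
    (S : Subgroup (Matrix.unitaryGroup (Fin n → Fin 2) ℂ))
    (hS : S = Subgroup.closure (Set.range g))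
    (hnegI : ∀ s ∈ S, (s : Matrix (Fin n → Fin 2) (Fin n → Fin 2) ℂ) ≠ -1)
    (P : Matrix (Fin n → Fin 2) (Fin n → Fin 2) ℂ)
    (hP : P = (List.ofFn fun i : Fin (n - k) =>
      ((2 : ℂ)⁻¹ • (1 + (g i : Matrix (Fin n → Fin 2) (Fin n → Fin 2) ℂ)))).prod) :
    (∀ i, (g i : Matrix (Fin n → Fin 2) (Fin n → Fin 2) ℂ)ᴴ = g i) ∧
    (∀ i, (g i : Matrix (Fin n → Fin 2) (Fin n → Fin 2) ℂ) *
      (g i : Matrix (Fin n → Fin 2) (Fin n → Fin 2) ℂ) = 1) ∧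
    P * P = P ∧ Pᴴ = P ∧
    LinearMap.range P.mulVecLin =
      fixedSubspace n
        ((fun u : Matrix.unitaryGroup (Fin n → Fin 2) ℂ =>
          (u : Matrix (Fin n → Fin 2) (Fin n → Fin 2) ℂ)) '' (S : Set _)) ∧
    P.trace = 2 ^ k := by

  have hgS : ∀ i, g i ∈ S := fun i => hS ▸ Subgroup.subset_closure ⟨i, rfl⟩
  -- squares
  have hsq : ∀ i, (g i : Matrix (Fin n → Fin 2) (Fin n → Fin 2) ℂ) * g i = 1 := by
    intro i
    rcases IsPauliGroupElem.sq (hpauli i) with h | h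
    · exact h
    · exfalso
      have hm := hnegI (g i * g i) (S.mul_mem (hgS i) (hgS i))
      rw [Matrix.UnitaryGroup.mul_val] at hm
      exact hm h
  -- hermitian
  have hherm : ∀ i, (g i : Matrix (Fin n → Fin 2) (Fin n → Fin 2) ℂ)ᴴ = g i := by
    intro i
    have hu : star ((g i : Matrix (Fin n → Fin 2) (Fin n → Fin 2) ℂ)) * g i = 1 :=
      Matrix.UnitaryGroup.star_mul_self (g i)
    calc (g i : Matrix (Fin n → Fin 2) (Fin n → Fin 2) ℂ)ᴴ
        = (g i : Matrix (Fin n → Fin 2) (Fin n → Fin 2) ℂ)ᴴ * ((g i : Matrix (Fin n → Fin 2) (Fin n → Fin 2) ℂ) * g i) := by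
          rw [hsq i, mul_one]
      _ = ((g i : Matrix (Fin n → Fin 2) (Fin n → Fin 2) ℂ)ᴴ * g i) * g i := by rw [mul_assoc]
      _ = g i := by
          rw [← Matrix.star_eq_conjTranspose, hu, one_mul]
  set Q : Fin (n - k) → Matrix (Fin n → Fin 2) (Fin n → Fin 2) ℂ :=
    fun i : Fin (n - k) =>
      ((2 : ℂ)⁻¹ • (1 + (g i : Matrix (Fin n → Fin 2) (Fin n → Fin 2) ℂ))) with hQdef
  have hgg : ∀ i j, (g i : Matrix (Fin n → Fin 2) (Fin n → Fin 2) ℂ) * g j =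
      (g j : Matrix (Fin n → Fin 2) (Fin n → Fin 2) ℂ) * g i :=
    fun i j => congrArg Subtype.val (hcomm i j)
  have hgQcomm : ∀ i j, (g i : Matrix (Fin n → Fin 2) (Fin n → Fin 2) ℂ) * Q j =
      Q j * g i := by
    intro i j
    simp only [hQdef, Matrix.mul_smul, Matrix.smul_mul, mul_add, add_mul, mul_one, one_mul,
      hgg i j]
  have hQQcomm : ∀ i j, Q i * Q j = Q j * Q i := by
    intro i j
    simp only [hQdef, Matrix.mul_smul, Matrix.smul_mul, mul_add, add_mul, mul_one, one_mul,
      hgg i j]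
    module
  have hQidem : ∀ i, Q i * Q i = Q i := by
    intro i
    have h2 : ((1 : Matrix (Fin n → Fin 2) (Fin n → Fin 2) ℂ) + g i) * (1 + g i) =
        (2 : ℂ) • (1 + (g i : Matrix (Fin n → Fin 2) (Fin n → Fin 2) ℂ)) := by
      simp only [mul_add, add_mul, one_mul, mul_one, hsq i, two_smul]
      abel
    simp only [hQdef, smul_mul_smul_comm, h2, smul_smul]
    norm_num
  have hQherm : ∀ i, (Q i)ᴴ = Q i := by
    intro i
    simp only [hQdef, Matrix.conjTranspose_smul, Matrix.conjTranspose_add,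
      Matrix.conjTranspose_one, hherm i]
    congr 1
    simp [Complex.ext_iff]
  have hgQ : ∀ i, (g i : Matrix (Fin n → Fin 2) (Fin n → Fin 2) ℂ) * Q i = Q i := by
    intro i
    simp only [hQdef, Matrix.mul_smul, mul_add, mul_one, hsq i]
    rw [add_comm]
  have hmemQ : ∀ x ∈ List.ofFn Q, ∃ j, Q j = x := by
    intro x hx
    exact (List.mem_ofFn (f := Q) (a := x)).1 hx
  -- P * P = P
  have hPP : P * P = P := by
    rw [hP]
    refine list_prod_sq _ ?_ ?_
    · intro x hx y hy
      obtain ⟨i, rfl⟩ := hmemQ x hx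
      obtain ⟨j, rfl⟩ := hmemQ y hy
      exact hQQcomm i j
    · intro x hx
      obtain ⟨i, rfl⟩ := hmemQ x hx
      exact hQidem i
  -- Pᴴ = P
  have hPH : Pᴴ = P := by
    rw [hP]
    refine list_prod_conjTranspose _ ?_ ?_
    · intro x hx y hy
      obtain ⟨i, rfl⟩ := hmemQ x hx
      obtain ⟨j, rfl⟩ := hmemQ y hy
      exact hQQcomm i j
    · intro x hx
      obtain ⟨i, rfl⟩ := hmemQ x hx
      exact hQherm i
  -- s * P = P for s in S
  have hsP : ∀ u : Matrix.unitaryGroup (Fin n → Fin 2) ℂ, u ∈ S →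
      (u : Matrix (Fin n → Fin 2) (Fin n → Fin 2) ℂ) * P = P := by
    intro u hu
    rw [hS] at hu
    refine Subgroup.closure_induction ?_ ?_ ?_ ?_ hu
    · rintro x ⟨i, rfl⟩
      rw [hP]
      refine list_prod_absorb _ _ ?_ ⟨Q i, (List.mem_ofFn (f := Q)).2 ⟨i, rfl⟩, hgQ i⟩
      intro x hx
      obtain ⟨j, rfl⟩ := hmemQ x hx
      exact hgQcomm i j
    · simp
    · intro x y hx hy px py
      rw [Matrix.UnitaryGroup.mul_val, mul_assoc, py, px]
    · intro x hx px
      calc (x⁻¹ : Matrix.unitaryGroup (Fin n → Fin 2) ℂ).1 * P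
          = (x⁻¹ : Matrix.unitaryGroup (Fin n → Fin 2) ℂ).1 * ((x : Matrix (Fin n → Fin 2) (Fin n → Fin 2) ℂ) * P) := by rw [px]
        _ = ((x⁻¹ * x : Matrix.unitaryGroup (Fin n → Fin 2) ℂ) : Matrix (Fin n → Fin 2) (Fin n → Fin 2) ℂ) * P := by
            rw [Matrix.UnitaryGroup.mul_val, mul_assoc]
        _ = P := by rw [inv_mul_cancel, Matrix.UnitaryGroup.one_val, one_mul]
  -- range
  have hrange : LinearMap.range P.mulVecLin =
      fixedSubspace n
        ((fun u : Matrix.unitaryGroup (Fin n → Fin 2) ℂ =>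
          (u : Matrix (Fin n → Fin 2) (Fin n → Fin 2) ℂ)) '' (S : Set _)) := by
    apply le_antisymm
    · rintro v ⟨w, rfl⟩
      rw [mem_fixedSubspace]
      rintro s ⟨u, huS, rfl⟩
      rw [Matrix.mulVecLin_apply, Matrix.mulVec_mulVec, hsP u huS]
    · intro v hv
      rw [mem_fixedSubspace] at hv
      have hQfix : ∀ i, (Q i).mulVec v = v := by
        intro i
        have hg1 : (g i : Matrix (Fin n → Fin 2) (Fin n → Fin 2) ℂ).mulVec v = v :=
          hv _ ⟨g i, hgS i, rfl⟩
        simp only [hQdef, Matrix.smul_mulVec, Matrix.add_mulVec, Matrix.one_mulVec, hg1]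
        rw [← two_smul ℂ v, smul_smul]
        norm_num
      refine ⟨v, ?_⟩
      rw [Matrix.mulVecLin_apply, hP]
      refine list_prod_mulVec_fix _ _ ?_
      intro A hA
      obtain ⟨i, rfl⟩ := hmemQ A hA
      exact hQfix i
  -- trace
  have htr0 : ∀ B : Finset (Fin (n - k)), B.Nonempty →
      Matrix.trace (gprod g hcomm B : Matrix (Fin n → Fin 2) (Fin n → Fin 2) ℂ) = 0 := by
    intro B hB
    rcases IsPauliGroupElem.trace_or (gprod_pauli g hcomm hpauli B) with h | ⟨α, hα, hgB⟩
    · exact h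
    exfalso
    have hBS : gprod g hcomm B ∈ S := gprod_mem g hcomm S hgS B
    have hsq1 : α * α = 1 := by
      rcases IsPhase.sq hα with h1 | h1
      · exact h1
      · exfalso
        have hm : gprod g hcomm B * gprod g hcomm B ∈ S := S.mul_mem hBS hBS
        have hval : ((gprod g hcomm B * gprod g hcomm B : Matrix.unitaryGroup (Fin n → Fin 2) ℂ) :
            Matrix (Fin n → Fin 2) (Fin n → Fin 2) ℂ) = -1 := by
          rw [Matrix.UnitaryGroup.mul_val, hgB, smul_mul_smul_comm, one_mul, h1, neg_smul, one_smul]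
        exact hnegI _ hm hval
    have hα1 : α = 1 := by
      rcases hα with h | h | h | h
      · exact h
      · exact absurd (by rw [hgB, h, neg_smul, one_smul]) (hnegI _ hBS)
      · rw [h, Complex.I_mul_I] at hsq1; norm_num at hsq1
      · rw [h, neg_mul_neg, Complex.I_mul_I] at hsq1
        exact absurd hsq1 (by norm_num)
    have hgB1 : gprod g hcomm B = 1 := by
      have hval : (gprod g hcomm B : Matrix (Fin n → Fin 2) (Fin n → Fin 2) ℂ) =
          ((1 : Matrix.unitaryGroup (Fin n → Fin 2) ℂ) : Matrix (Fin n → Fin 2) (Fin n → Fin 2) ℂ) := by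
        rw [hgB, hα1, one_smul, Matrix.UnitaryGroup.one_val]
      exact Subtype.coe_injective hval
    obtain ⟨i₀, hi₀⟩ := hB
    have hB' : gprod g hcomm (B.erase i₀) ∈
        Subgroup.closure (Set.range fun j : {j : Fin (n - k) // j ≠ i₀} => g j) := by
      refine gprod_mem' g hcomm _ _ ?_
      intro j hj
      exact Subgroup.subset_closure ⟨⟨j, Finset.ne_of_mem_erase hj⟩, rfl⟩
    have hins : g i₀ * gprod g hcomm (B.erase i₀) = 1 := by
      rw [← gprod_insert g hcomm i₀ _ (Finset.notMem_erase _ _), Finset.insert_erase hi₀, hgB1]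
    have hgi₀ : g i₀ ∈
        Subgroup.closure (Set.range fun j : {j : Fin (n - k) // j ≠ i₀} => g j) := by
      rw [eq_inv_of_mul_eq_one_left hins]
      exact Subgroup.inv_mem _ hB'
    have hle : Subgroup.closure (Set.range g) ≤
        Subgroup.closure (Set.range fun j : {j : Fin (n - k) // j ≠ i₀} => g j) := by
      rw [Subgroup.closure_le]
      rintro x ⟨j, rfl⟩
      by_cases hj : j = i₀
      · subst hj; exact hgi₀
      · exact Subgroup.subset_closure ⟨⟨j, hj⟩, rfl⟩
    exact (hindep i₀).not_ge hle
  have key : ∀ l : List (Fin (n - k)), l.Nodup → ∀ B : Finset (Fin (n - k)),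
      (∀ i ∈ l, i ∉ B) →
      Matrix.trace ((l.map Q).prod * (gprod g hcomm B : Matrix (Fin n → Fin 2) (Fin n → Fin 2) ℂ)) =
        if B = ∅ then (2 : ℂ) ^ n * ((2 : ℂ)⁻¹) ^ l.length else 0 := by
    intro l
    induction l with
    | nil =>
      intro _ B hB
      simp only [List.map_nil, List.prod_nil, one_mul, List.length_nil, pow_zero, mul_one]
      by_cases h : B = ∅
      · rw [if_pos h, h, gprod_empty, Matrix.UnitaryGroup.one_val, Matrix.trace_one]
        rw [Fintype.card_fun]
        push_cast
        simp
      · rw [if_neg h]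
        exact htr0 B (Finset.nonempty_iff_ne_empty.2 h)
    | cons i t ih =>
      intro hnd B hB
      have hit : i ∉ t := (List.nodup_cons.mp hnd).1
      have hndt : t.Nodup := (List.nodup_cons.mp hnd).2
      have hiB : i ∉ B := hB i List.mem_cons_self
      have htB : ∀ j ∈ t, j ∉ B := fun j hj => hB j (List.mem_cons_of_mem i hj)
      have htB' : ∀ j ∈ t, j ∉ insert i B := by
        intro j hj
        simp only [Finset.mem_insert, not_or]
        exact ⟨fun h => hit (h ▸ hj), htB j hj⟩
      have hcom : Commute ((g i : Matrix (Fin n → Fin 2) (Fin n → Fin 2) ℂ)) ((t.map Q).prod) := by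
        refine Commute.list_prod_right _ _ ?_
        intro y hy
        obtain ⟨j, _, rfl⟩ := List.mem_map.mp hy
        exact hgQcomm i j
      have hmove : (g i : Matrix (Fin n → Fin 2) (Fin n → Fin 2) ℂ) *
          ((t.map Q).prod * (gprod g hcomm B : Matrix (Fin n → Fin 2) (Fin n → Fin 2) ℂ)) =
          (t.map Q).prod * (gprod g hcomm (insert i B) : Matrix (Fin n → Fin 2) (Fin n → Fin 2) ℂ) := by
        rw [gprod_insert g hcomm i B hiB, Matrix.UnitaryGroup.mul_val, ← mul_assoc,
          ← mul_assoc, hcom.eq]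
      rw [List.map_cons, List.prod_cons, mul_assoc]
      have hexp : Q i * ((t.map Q).prod * (gprod g hcomm B : Matrix (Fin n → Fin 2) (Fin n → Fin 2) ℂ)) =
          (2 : ℂ)⁻¹ • ((t.map Q).prod * (gprod g hcomm B : Matrix (Fin n → Fin 2) (Fin n → Fin 2) ℂ) +
            (g i : Matrix (Fin n → Fin 2) (Fin n → Fin 2) ℂ) *
              ((t.map Q).prod * (gprod g hcomm B : Matrix (Fin n → Fin 2) (Fin n → Fin 2) ℂ))) := by
        simp only [hQdef, Matrix.smul_mul, add_mul, one_mul]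
      rw [hexp, hmove, Matrix.trace_smul, Matrix.trace_add,
        ih hndt B htB, ih hndt (insert i B) htB']
      rw [if_neg (Finset.insert_ne_empty i B)]
      by_cases h : B = ∅
      · rw [if_pos h, if_pos h]
        simp only [List.length_cons, smul_eq_mul]
        ring
      · rw [if_neg h, if_neg h]
        simp
  have htrace : P.trace = 2 ^ k := by
    have h := key (List.finRange (n - k)) (List.nodup_finRange _) ∅ (by simp)
    rw [if_pos rfl, gprod_empty, Matrix.UnitaryGroup.one_val, mul_one,
      List.length_finRange] at h
    rw [hP, List.ofFn_eq_map, h]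
    have h2 : (2 : ℂ) ^ n = 2 ^ (n - k) * 2 ^ k := by
      rw [← pow_add, Nat.sub_add_cancel hk]
    rw [h2, inv_pow, mul_comm ((2 : ℂ) ^ (n - k)) _, mul_assoc,
      mul_inv_cancel₀ (pow_ne_zero _ two_ne_zero), mul_one]
  exact ⟨hherm, hsq, hPP, hPH, hrange, htrace⟩
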